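/- Let $N>0$ and let $r,\alpha\in\mathbb{R}^n_{>0}$ with $\sum_j\alpha_j=1$. Suppose $(S^*, I^*)\in\mathbb{R}^n_{\ge 0}\times\mathbb{R}^n_{\ge 0}$ satisfies: (a) $\beta_i(r_i - S_i^*) I_i^* = 0$ for all $i$ with $\beta_i>0$; (b) $d_I\sum_j L_{ij}I_j^* + \beta_i(S_i^*-r_i)I_i^* = 0$ for all $i$; (c) $\sum_i(S_i^*+I_i^*)=N$; where $\mathcal{L}$ is quasi-positive, irreducible with zero column sums and $d_I>0$. Then $I^* = k\alpha$ for some $k\ge 0$, and if $k>0$ then $S^* = r$ and $k = N - \sum_j r_j$. -/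

import Mathlib

/-- A square matrix is irreducible if for every nonempty proper coordinate subset `s`
there is a nonzero entry `L i j` with `j ∈ s` and `i ∉ s`. -/
def Matrix.IsIrreducible' {n : ℕ} (L : Matrix (Fin n) (Fin n) ℝ) : Prop :=
  ∀ s : Finset (Fin n), s.Nonempty → s ≠ Finset.univ →
    ∃ i ∉ s, ∃ j ∈ s, L i j ≠ 0

/-- For the limit system as `d_S → 0` the infected component is a
nonnegative multiple `k α` of the Perron vector; if `k > 0` then `S* = r` and
`k = N - ∑ r_j`. -/
theorem limit_equilibrium_structure {n : ℕ}
    (L : Matrix (Fin n) (Fin n) ℝ)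
    (hquasi : ∀ i j, i ≠ j → 0 ≤ L i j)
    (hirr : L.IsIrreducible')
    (hcol : ∀ j, ∑ i, L i j = 0)
    (α : Fin n → ℝ) (hα0 : L.mulVec α = 0) (hαpos : ∀ j, 0 < α j)
    (hαsum : ∑ j, α j = 1)
    (dI N : ℝ) (hdI : 0 < dI) (hN : 0 < N)
    (β r Sstar Istar : Fin n → ℝ)
    (hβ : ∀ i, 0 < β i) (hr : ∀ i, 0 < r i)
    (hSnn : ∀ i, 0 ≤ Sstar i) (hInn : ∀ i, 0 ≤ Istar i)
    (ha : ∀ i, 0 < β i → β i * (r i - Sstar i) * Istar i = 0)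
    (hb : ∀ i, dI * (∑ j, L i j * Istar j) + β i * (Sstar i - r i) * Istar i = 0)
    (hc : ∑ i, (Sstar i + Istar i) = N) :
    ∃ k : ℝ, 0 ≤ k ∧ (∀ i, Istar i = k * α i) ∧
      (0 < k → (∀ i, Sstar i = r i) ∧ k = N - ∑ j, r j) := by
  -- n = 0 is impossible
  rcases Nat.eq_zero_or_pos n with hn | hn
  · exfalso; subst hn; simp at hc; linarith
  have hne : Nonempty (Fin n) := ⟨⟨0, hn⟩⟩
  -- L * Istar = 0
  have hLI : ∀ i, ∑ j, L i j * Istar j = 0 := by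
    intro i
    have h1 : β i * (Sstar i - r i) * Istar i = 0 := by
      have := ha i (hβ i); nlinarith [this]
    have h2 := hb i
    rw [h1, add_zero] at h2
    exact (mul_eq_zero.mp h2).resolve_left (ne_of_gt hdI)
  have hLα : ∀ i, ∑ j, L i j * α j = 0 := by
    intro i
    have := congrFun hα0 i
    simpa [Matrix.mulVec, dotProduct] using this
  -- k = min ratio
  set k := Finset.univ.inf' (Finset.univ_nonempty) (fun i => Istar i / α i) with hk
  obtain ⟨i0, -, hi0⟩ := Finset.exists_mem_eq_inf' (Finset.univ_nonempty (α := Fin n))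
    (fun i => Istar i / α i)
  set w := fun i => Istar i - k * α i with hw
  have hwnn : ∀ i, 0 ≤ w i := by
    intro i
    have hle : k ≤ Istar i / α i := Finset.inf'_le _ (Finset.mem_univ i)
    have := (div_le_div_iff₀ (hαpos i) (hαpos i)).mp (le_refl (Istar i / α i))
    have : k * α i ≤ Istar i := by
      have := mul_le_mul_of_nonneg_right hle (le_of_lt (hαpos i))
      rwa [div_mul_cancel₀ _ (ne_of_gt (hαpos i))] at this
    simp [hw]; linarith
  have hwi0 : w i0 = 0 := by
    simp only [hw]
    have hke : k = Istar i0 / α i0 := hi0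
    rw [hke, div_mul_cancel₀ _ (ne_of_gt (hαpos i0))]
    ring
  have hLw : ∀ i, ∑ j, L i j * w j = 0 := by
    intro i
    have : ∑ j, L i j * w j = (∑ j, L i j * Istar j) - k * ∑ j, L i j * α j := by
      rw [Finset.mul_sum, ← Finset.sum_sub_distrib]
      apply Finset.sum_congr rfl
      intro j _; simp [hw]; ring
    rw [this, hLI i, hLα i]; ring
  -- w = 0 by irreducibility
  have hw0 : ∀ i, w i = 0 := by
    by_contra hcon
    push_neg at hcon
    obtain ⟨j0, hj0⟩ := hcon
    set s : Finset (Fin n) := Finset.univ.filter (fun j => w j ≠ 0) with hs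
    have hsne : s.Nonempty := ⟨j0, by simp [hs, hj0]⟩
    have hsnu : s ≠ Finset.univ := by
      intro h
      have : i0 ∈ s := h ▸ Finset.mem_univ i0
      simp [hs, hwi0] at this
    obtain ⟨i, hi, j, hj, hLij⟩ := hirr s hsne hsnu
    have hwi : w i = 0 := by
      by_contra h; exact hi (by simp [hs, h])
    have hwj : 0 < w j := by
      have h1 : w j ≠ 0 := by simp [hs] at hj; exact hj
      exact lt_of_le_of_ne (hwnn j) (Ne.symm h1)
    have hijne : i ≠ j := fun h => hwj.ne' (h ▸ hwi)
    have hterm : 0 < L i j * w j :=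
      mul_pos (lt_of_le_of_ne (hquasi i j hijne) (Ne.symm hLij)) hwj
    have hpos : 0 < ∑ j', L i j' * w j' := by
      apply Finset.sum_pos' _ ⟨j, Finset.mem_univ j, hterm⟩
      intro m _
      rcases eq_or_ne (w m) 0 with h | h
      · simp [h]
      · have : i ≠ m := fun he => h (he ▸ hwi)
        exact mul_nonneg (hquasi i m this) (hwnn m)
    rw [hLw i] at hpos; exact lt_irrefl 0 hpos
  have hIk : ∀ i, Istar i = k * α i := by
    intro i; have := hw0 i; simp [hw] at this; linarith
  refine ⟨k, ?_, hIk, ?_⟩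
  · have := hInn i0
    rw [hIk i0] at this
    exact nonneg_of_mul_nonneg_right (by linarith [this] : 0 ≤ α i0 * k) (hαpos i0)
  · intro hkpos
    have hSr : ∀ i, Sstar i = r i := by
      intro i
      have hI : 0 < Istar i := by rw [hIk i]; exact mul_pos hkpos (hαpos i)
      have := ha i (hβ i)
      have h2 : (r i - Sstar i) = 0 := by
        rcases mul_eq_zero.mp this with h | h
        · rcases mul_eq_zero.mp h with h' | h'
          · exact absurd h' (ne_of_gt (hβ i))
          · exact h'
        · exact absurd h (ne_of_gt hI)
      linarith
    refine ⟨hSr, ?_⟩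
    have : ∑ i, (Sstar i + Istar i) = (∑ i, r i) + k := by
      rw [Finset.sum_congr rfl (fun i _ => by rw [hSr i, hIk i]),
        Finset.sum_add_distrib, ← Finset.mul_sum, hαsum, mul_one]
    rw [hc] at this; linarith
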